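/- Let V be a finite-dimensional vector space over ℚ equipped with a nondegenerate alternating bilinear form ω, and let c_1, …, c_s ∈ V be linearly independent vectors with ω(c_i, c_j) = 0 for all i, j. Let f : V → V be the composite of the transvections T_i, where T_i(x) = x + ω(x, c_i)·c_i. Then: (a) (f − id)² = 0, so f is unipotent and its characteristic polynomial is (X − 1)^{dim V}; and (b) the fixed subspace {x ∈ V : f(x) = x} has dimension (dim V) − s. (This linear algebra underlies Example 7.2: there the monodromy f of the surface bundle N = N(g,s) is a product of Dehn twists along s disjoint simple closed curves with nonseparating union, giving b₁(N) = 1 + 2g − s and Δ^φ_N(t) ≐ (t−1)^{2g} for the fibered class φ.) -/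
import Mathlib

open Polynomial Matrix

lemma my_charpoly_shift {n : ℕ} (M : Matrix (Fin n) (Fin n) ℚ) :
    (M - 1).charpoly = M.charpoly.comp (X + 1) := by
  let φ : ℚ[X] →+* ℚ[X] := eval₂RingHom C (X + 1)
  have hmap : (charmatrix M).map φ = charmatrix (M - 1) := by
    ext i j
    by_cases h : i = j
    · subst h
      simp [φ, charmatrix_apply_eq, Matrix.sub_apply, eval₂_sub, Matrix.one_apply]
      ring
    · simp [φ, charmatrix_apply_ne _ _ _ h, Matrix.sub_apply, Matrix.one_apply_ne h]
  have : (charmatrix (M - 1)).det = φ (charmatrix M).det := by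
    rw [← hmap]; exact (RingHom.map_det φ _).symm
  rw [Matrix.charpoly, this, Matrix.charpoly]
  rfl

lemma my_charpoly_unipotent (V : Type*) [AddCommGroup V] [Module ℚ V] [FiniteDimensional ℚ V]
    (f : Module.End ℚ V) (h : (f - 1) * (f - 1) = 0) :
    f.charpoly = (X - 1) ^ (Module.finrank ℚ V) := by
  have hnil : IsNilpotent (f - 1) := ⟨2, by rw [pow_two]; exact h⟩
  have hN : (f - 1).charpoly = X ^ (Module.finrank ℚ V) :=
    hnil.charpoly_eq_X_pow_finrank
  let b := Module.finBasis ℚ V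
  let M := LinearMap.toMatrix b b f
  have hM : LinearMap.toMatrix b b (f - 1) = M - 1 := by
    simp [M, map_sub, LinearMap.toMatrix_one]
  have h1 : (M - 1).charpoly = X ^ (Module.finrank ℚ V) := by
    rw [← hM, LinearMap.charpoly_toMatrix, hN]
  have h2 : M.charpoly.comp (X + 1) = X ^ (Module.finrank ℚ V) := by
    rw [← my_charpoly_shift, h1]
  have h3 : M.charpoly = (X - 1) ^ (Module.finrank ℚ V) := by
    have := congrArg (fun p => p.comp (X - 1 : ℚ[X])) h2
    simpa [Polynomial.comp_assoc, Polynomial.pow_comp, Polynomial.X_comp,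
      Polynomial.add_comp, Polynomial.one_comp, Polynomial.sub_comp] using this
  rw [← f.charpoly_toMatrix b]; exact h3

/-- Linear algebra underlying Example 7.2: a product of transvections along pairwise
`ω`-orthogonal, linearly independent vectors `c i` of a nondegenerate alternating
form `ω` is unipotent with `(f - 1)² = 0`, characteristic polynomial `(X - 1)^dim V`,
and fixed subspace of dimension `dim V - s`. -/
theorem stmt_8 (V : Type*) [AddCommGroup V] [Module ℚ V] [FiniteDimensional ℚ V]
    (ω : V →ₗ[ℚ] V →ₗ[ℚ] ℚ)
    (halt : ∀ x, ω x x = 0)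
    (hnd : ∀ x, (∀ y, ω x y = 0) → x = 0)
    (s : ℕ) (c : Fin s → V) (hli : LinearIndependent ℚ c)
    (hortho : ∀ i j, ω (c i) (c j) = 0)
    (T : Fin s → Module.End ℚ V)
    (hT : ∀ i x, T i x = x + ω x (c i) • c i)
    (f : Module.End ℚ V) (hf : f = (List.ofFn T).prod) :
    (f - 1) * (f - 1) = 0 ∧
    f.charpoly = (Polynomial.X - 1) ^ (Module.finrank ℚ V) ∧
    Module.finrank ℚ (LinearMap.ker (f - 1)) = Module.finrank ℚ V - s := by
  -- skew symmetry
  have hsk : ∀ x y, ω x y = -ω y x := by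
    intro x y
    have := halt (x + y)
    simp [map_add, halt] at this
    linarith
  -- the nilpotent part
  set g : Module.End ℚ V := ∑ i, (ω.flip (c i)).smulRight (c i) with hg
  have hgapp : ∀ x, g x = ∑ i, ω x (c i) • c i := by
    intro x; simp [hg, LinearMap.sum_apply]
  -- ω of any combination of c's with c i is 0
  have hcomb : ∀ (L : List (Fin s)) (x : V) (i : Fin s),
      ω ((L.map fun j => ω x (c j) • c j).sum) (c i) = 0 := by
    intro L x i
    induction L with
    | nil => simp
    | cons j L ih => simp [map_add, hortho, ih]
  have key : ∀ (L : List (Fin s)) (x : V),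
      (L.map T).prod x = x + (L.map fun i => ω x (c i) • c i).sum := by
    intro L x
    induction L with
    | nil => simp [Module.End.one_apply]
    | cons i L ih =>
      rw [List.map_cons, List.prod_cons, Module.End.mul_apply, ih, hT,
        List.map_cons, List.sum_cons]
      simp only [map_add, LinearMap.add_apply, hcomb, add_zero]
      abel
  have hfg : f = 1 + g := by
    ext x
    rw [hf, List.ofFn_eq_map, key]
    simp [hgapp, Fin.sum_univ_def]
  have hsub : f - 1 = g := by rw [hfg]; abel
  -- (f-1)^2 = 0
  have hgg : g * g = 0 := by
    ext x
    rw [Module.End.mul_apply, hgapp, hgapp]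
    simp [map_sum, hortho]
  have part1 : (f - 1) * (f - 1) = 0 := by rw [hsub]; exact hgg
  refine ⟨part1, my_charpoly_unipotent V f part1, ?_⟩
  -- dimension of the kernel
  set n := Module.finrank ℚ V with hn
  -- the map x ↦ (ω x (c i))_i
  set P : V →ₗ[ℚ] (Fin s → ℚ) := LinearMap.pi (fun i => ω.flip (c i)) with hP
  have hPapp : ∀ x i, P x i = ω x (c i) := by intro x i; rfl
  have hker : LinearMap.ker g = LinearMap.ker P := by
    ext x
    simp only [LinearMap.mem_ker, hgapp]
    constructor
    · intro h
      have := Fintype.linearIndependent_iff.mp hli (fun i => ω x (c i)) h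
      funext i; simpa [hPapp] using this i
    · intro h
      have : ∀ i, ω x (c i) = 0 := fun i => congrFun h i
      simp [this]
  have hsurj : Function.Surjective P := by
    rw [← LinearMap.range_eq_top]
    by_contra hne
    have hlt : LinearMap.range P < ⊤ := lt_top_iff_ne_top.mpr hne
    obtain ⟨φ, hφ0, hφ⟩ := Submodule.exists_dual_map_eq_bot_of_lt_top hlt inferInstance
    set a : Fin s → ℚ := fun i => φ (fun j => if i = j then 1 else 0) with ha
    have hφapp : ∀ y : Fin s → ℚ, φ y = ∑ i, y i * a i := by
      intro y
      conv_lhs => rw [pi_eq_sum_univ y, map_sum]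
      refine Finset.sum_congr rfl fun i _ => ?_
      rw [_root_.map_smul, smul_eq_mul, ha]
    have hz : ∀ x : V, ω x (∑ i, a i • c i) = 0 := by
      intro x
      have hmem : φ (P x) ∈ Submodule.map φ (LinearMap.range P) :=
        ⟨P x, LinearMap.mem_range_self _ _, rfl⟩
      rw [hφ] at hmem
      have : φ (P x) = 0 := hmem
      rw [hφapp] at this
      simpa [map_sum, _root_.map_smul, hPapp, smul_eq_mul, mul_comm] using this
    have hz0 : (∑ i, a i • c i) = 0 := by
      apply hnd
      intro y
      rw [hsk]
      rw [hz y]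
      ring
    have ha0 : ∀ i, a i = 0 := Fintype.linearIndependent_iff.mp hli a hz0
    apply hφ0
    ext y
    simp [hφapp, ha0]
  have hrange : LinearMap.range P = ⊤ := LinearMap.range_eq_top.mpr hsurj
  have hrn := LinearMap.finrank_range_add_finrank_ker P
  rw [hrange] at hrn
  have hfr : Module.finrank ℚ (⊤ : Submodule ℚ (Fin s → ℚ)) = s := by
    rw [finrank_top]; simp
  rw [hfr] at hrn
  rw [hsub, hker]
  omega
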